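/- Let A = c(ξ'), N = c(dx_n) be endomorphisms of a 4-dimensional space with A² = N² = −id, AN = −NA, trace A = trace N = 0, trace(AN) = 0. Let X = c(df) be any endomorphism of the form Σ_j a_j c(e_j) in the Clifford algebra. Then trace[((−(iz+2)/(4(z−i)²))·A X A − (i/(4(z−i)²))·(N X A + A X N) − (iz/(4(z−i)²))·N X N)·(2i/f)·((1−z²)/(1+z²)²·N − 2z/(1+z²)²·A)] = (i/(f(1+z²)²))·trace(NX) + (1/(f(1+z²)²))·trace(AX), as rational functions of z. -/
import Mathlib


open Complex

set_option maxHeartbeats 1600000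

/-- In a 4-dimensional Clifford module `S`, with `A = c(ξ')`, `N = c(dxₙ)`
satisfying `A² = N² = −id`, `AN = −NA`, `trace A = trace N = trace(AN) = 0`, and
`X = c(df) = Σⱼ aⱼ c(eⱼ)` an element of the degree-one Clifford span (so `XA + AX` and
`XN + NX` are scalars), `f` a nonzero scalar, identity (4.33) of the paper holds as an
identity of rational functions of `z`:
`trace[(−((iz+2)/(4(z−i)²))·AXA − (i/(4(z−i)²))·(NXA + AXN) − (iz/(4(z−i)²))·NXN)
 ·(2i/f)·((1−z²)/(1+z²)²·N − 2z/(1+z²)²·A)]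
 = (i/(f(1+z²)²))·trace(NX) + (1/(f(1+z²)²))·trace(AX)`. -/
theorem stmt11 {S : Type*} [AddCommGroup S] [Module ℂ S] [FiniteDimensional ℂ S]
    (hS : Module.finrank ℂ S = 4)
    (A N X : Module.End ℂ S)
    (hA2 : A * A = -1) (hN2 : N * N = -1) (hAN : A * N = -(N * A))
    (htrA : LinearMap.trace ℂ S A = 0) (htrN : LinearMap.trace ℂ S N = 0)
    (htrAN : LinearMap.trace ℂ S (A * N) = 0)
    (a b : ℂ)
    (hXA : X * A + A * X = a • (1 : Module.End ℂ S))
    (hXN : X * N + N * X = b • (1 : Module.End ℂ S))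
    (f : ℂ) (hf : f ≠ 0) :
    ∀ z : ℂ, z ≠ I → z ≠ -I →
      LinearMap.trace ℂ S
          ((-(((I * z + 2) / (4 * (z - I) ^ 2))) • (A * X * A) -
              (I / (4 * (z - I) ^ 2)) • (N * X * A + A * X * N) -
              (I * z / (4 * (z - I) ^ 2)) • (N * X * N)) *
            ((2 * I / f) •
              (((1 - z ^ 2) / (1 + z ^ 2) ^ 2) • N - (2 * z / (1 + z ^ 2) ^ 2) • A))) =
        (I / (f * (1 + z ^ 2) ^ 2)) * LinearMap.trace ℂ S (N * X) +
          (1 / (f * (1 + z ^ 2) ^ 2)) * LinearMap.trace ℂ S (A * X) := by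
  intro z hz1 hz2
  set T := LinearMap.trace ℂ S with hT
  -- basic algebraic reductions
  have hAXA : A * X * A = a • A + X := by
    have h : A * X = a • 1 - X * A := by
      rw [eq_sub_iff_add_eq, add_comm]; exact hXA
    calc A * X * A = (a • 1 - X * A) * A := by rw [h]
      _ = a • A - X * (A * A) := by
          rw [sub_mul, smul_mul_assoc, one_mul, mul_assoc]
      _ = a • A + X := by rw [hA2, mul_neg_one, sub_neg_eq_add]
  have hNXN : N * X * N = b • N + X := by
    have h : N * X = b • 1 - X * N := by
      rw [eq_sub_iff_add_eq, add_comm]; exact hXN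
    calc N * X * N = (b • 1 - X * N) * N := by rw [h]
      _ = b • N - X * (N * N) := by
          rw [sub_mul, smul_mul_assoc, one_mul, mul_assoc]
      _ = b • N + X := by rw [hN2, mul_neg_one, sub_neg_eq_add]
  have htrXN : T (X * N) = T (N * X) := LinearMap.trace_mul_comm ℂ X N
  have htrXA : T (X * A) = T (A * X) := LinearMap.trace_mul_comm ℂ X A
  have htrNA : T (N * A) = 0 := by
    rw [LinearMap.trace_mul_comm ℂ N A]; exact htrAN
  have htr1 : T (1 : Module.End ℂ S) = 4 := by
    rw [hT, LinearMap.trace_one, hS]; norm_num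
  -- relate a, b to traces
  have ha : a * 4 = 2 * T (A * X) := by
    have := congrArg T hXA
    rw [map_add, htrXA, map_smul, htr1, smul_eq_mul] at this
    linear_combination -this
  have hb : b * 4 = 2 * T (N * X) := by
    have := congrArg T hXN
    rw [map_add, htrXN, map_smul, htr1, smul_eq_mul] at this
    linear_combination -this
  -- the eight trace values
  have t1 : T (A * X * A * N) = T (N * X) := by
    rw [hAXA, add_mul, smul_mul_assoc, map_add, map_smul, htrAN, htrXN]; simp
  have t2 : T (A * X * A * A) = -T (A * X) := by
    have h : A * X * A * A = a • (A * A) + X * A := by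
      rw [hAXA, add_mul, smul_mul_assoc]
    rw [h, hA2, map_add, map_smul, htrXA, smul_eq_mul, map_neg, htr1]
    linear_combination -ha
  have t3 : T (N * X * N * N) = -T (N * X) := by
    have h : N * X * N * N = b • (N * N) + X * N := by
      rw [hNXN, add_mul, smul_mul_assoc]
    rw [h, hN2, map_add, map_smul, htrXN, smul_eq_mul, map_neg, htr1]
    linear_combination -hb
  have t4 : T (N * X * N * A) = T (A * X) := by
    rw [hNXN, add_mul, smul_mul_assoc, map_add, map_smul, htrNA, htrXA]; simp
  have t5 : T (N * X * A * N) = -T (A * X) := by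
    have : N * X * A * N = -(N * X * N * A) := by
      rw [mul_assoc (N * X) A N, hAN, mul_neg, ← mul_assoc]
    rw [this, map_neg, t4]
  have t6 : T (A * X * N * N) = -T (A * X) := by
    rw [mul_assoc (A * X) N N, hN2, mul_neg, mul_one, map_neg]
  have t7 : T (N * X * A * A) = -T (N * X) := by
    rw [mul_assoc (N * X) A A, hA2, mul_neg, mul_one, map_neg]
  have t8 : T (A * X * N * A) = -T (N * X) := by
    have h := LinearMap.trace_mul_comm ℂ (A * X * N) A
    rw [hT, h]
    have : A * (A * X * N) = -(X * N) := by
      rw [← mul_assoc, ← mul_assoc, hA2]; simp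
    rw [this, map_neg, htrXN]
  -- nonvanishing denominators
  have hzI : z - I ≠ 0 := sub_ne_zero.mpr hz1
  have hzI' : z + I ≠ 0 := by
    intro h; exact hz2 (by linear_combination h)
  have hz2ne : (1 : ℂ) + z ^ 2 ≠ 0 := by
    have : (1 : ℂ) + z ^ 2 = (z + I) * (z - I) := by
      ring_nf; rw [Complex.I_sq]; ring
    rw [this]; exact mul_ne_zero hzI' hzI
  -- expand the left-hand side
  simp only [mul_sub, sub_mul, add_mul, mul_add, smul_mul_assoc, mul_smul_comm,
    smul_smul, smul_sub, smul_add, neg_smul, neg_mul, mul_neg, map_add, map_sub,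
    map_neg, map_smul, smul_eq_mul]
  rw [t1, t2, t3, t4, t5, t6, t7, t8]
  have h2 : (I:ℂ)^2 = -1 := Complex.I_sq
  have hc1 : (z - I) * (z - I)⁻¹ = 1 := mul_inv_cancel₀ hzI
  simp only [div_eq_mul_inv, mul_inv, ← inv_pow]
  linear_combination
    (f⁻¹ * ((1 + z ^ 2)⁻¹) ^ 2 * (T (N * X) * I + T (A * X)) *
      ((z - I) * (z - I)⁻¹ + 1)) * hc1 +
    (f⁻¹ * ((1 + z ^ 2)⁻¹) ^ 2 *
      (-(T (N * X)) * I * ((z - I)⁻¹) ^ 2 +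
        T (A * X) * (-(((z - I)⁻¹) ^ 2 * (z - I) ^ 2) + I * (I - 2 * z) * ((z - I)⁻¹) ^ 2))) * h2
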